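/- Let N ≥ 1 users have positive TDMA instantaneous throughputs r₁, …, r_N and let R = {γ ∈ ℝ^N : γᵢ ≥ 0 for all i, and ∑ᵢ γᵢ/rᵢ = 1}. If δ ≥ 1 - 1/N, then for every γ ∈ R there exists a user i* and a vector γ' ∈ R such that γ_{i*} = (1-δ)·r_{i*} + δ·γ'_{i*} and γⱼ = δ·γ'ⱼ for all j ≠ i*; that is, R is a self-generating set. -/

import Mathlib

theorem stmt_11 (N : ℕ) (hN : 1 ≤ N) (r : Fin N → ℝ) (hr : ∀ i, 0 < r i)
    (δ : ℝ) (hδ : 1 - 1 / (N : ℝ) ≤ δ) :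
    ∀ γ : Fin N → ℝ, (∀ i, 0 ≤ γ i) → (∑ i, γ i / r i = 1) →
      ∃ istar : Fin N, ∃ γ' : Fin N → ℝ,
        (∀ i, 0 ≤ γ' i) ∧ (∑ i, γ' i / r i = 1) ∧
        γ istar = (1 - δ) * r istar + δ * γ' istar ∧
        ∀ j, j ≠ istar → γ j = δ * γ' j := by
  intro γ hγ hsum
  have hNpos : (0:ℝ) < N := by exact_mod_cast hN
  have hδ0 : 0 ≤ δ := by
    have : (0:ℝ) ≤ 1 - 1 / N := by
      rw [sub_nonneg, div_le_one hNpos]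
      exact_mod_cast hN
    linarith
  obtain ⟨istar, -, hmax⟩ := Finset.exists_max_image Finset.univ (fun i => γ i / r i)
    ⟨⟨0, hN⟩, Finset.mem_univ _⟩
  have hmax' : ∀ j : Fin N, γ j / r j ≤ γ istar / r istar := fun j => hmax j (Finset.mem_univ j)
  have hkey : 1 / (N:ℝ) ≤ γ istar / r istar := by
    have h1 : (1:ℝ) ≤ N * (γ istar / r istar) := by
      calc (1:ℝ) = ∑ i, γ i / r i := hsum.symm
        _ ≤ ∑ _i : Fin N, γ istar / r istar := Finset.sum_le_sum (fun i _ => hmax' i)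
        _ = N * (γ istar / r istar) := by simp [mul_comm]
    rw [div_le_iff₀ hNpos]
    linarith [h1]
  have hge : (1 - δ) * r istar ≤ γ istar := by
    have h2 : 1 - δ ≤ γ istar / r istar := le_trans (by linarith) hkey
    calc (1 - δ) * r istar ≤ (γ istar / r istar) * r istar :=
          mul_le_mul_of_nonneg_right h2 (hr istar).le
      _ = γ istar := div_mul_cancel₀ _ (ne_of_gt (hr istar))
  rcases eq_or_lt_of_le hδ0 with h0 | hδpos
  · -- δ = 0, so N = 1
    have hN1 : N = 1 := by
      by_contra hne
      have h2 : 2 ≤ N := by omega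
      have hlt : (1:ℝ) < N := by exact_mod_cast h2.trans_lt' one_lt_two
      have : (0:ℝ) < 1 - 1 / N := by
        rw [sub_pos, div_lt_one hNpos]; exact hlt
      linarith [hδ, h0.symm]
    refine ⟨istar, γ, hγ, hsum, ?_, ?_⟩
    · rw [← h0]
      have hle : γ istar / r istar ≤ 1 := by
        have h3 : γ istar / r istar ≤ ∑ i, γ i / r i :=
          Finset.single_le_sum (f := fun i => γ i / r i)
            (fun i _ => div_nonneg (hγ i) (hr i).le) (Finset.mem_univ istar)
        linarith [hsum]
      have hge1 : 1 ≤ γ istar / r istar := le_trans (by rw [← h0] at hδ; linarith) hkey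
      have heq : γ istar / r istar = 1 := le_antisymm hle hge1
      have := (div_eq_one_iff_eq (ne_of_gt (hr istar))).mp heq
      linarith
    · intro j hj
      exact absurd (Fin.ext (by omega)) hj
  · -- δ > 0
    set γ' : Fin N → ℝ := fun j => if j = istar then (γ istar - (1 - δ) * r istar) / δ
        else γ j / δ with hγ'def
    have hterm : ∀ i, δ * (γ' i / r i) = γ i / r i - (if i = istar then (1 - δ) else 0) := by
      intro i
      by_cases h : i = istar
      · subst h
        simp only [hγ'def, if_true]
        rw [div_div, mul_div_assoc', mul_div_mul_left _ _ (ne_of_gt hδpos), sub_div,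
          mul_div_assoc, div_self (ne_of_gt (hr i)), mul_one]
      · simp only [hγ'def, h, if_false]
        rw [div_div, mul_div_assoc', mul_div_mul_left _ _ (ne_of_gt hδpos), sub_zero]
    refine ⟨istar, γ', ?_, ?_, ?_, ?_⟩
    · intro i
      by_cases h : i = istar
      · subst h; simp only [hγ'def, if_true]
        exact div_nonneg (by linarith) hδpos.le
      · simp only [hγ'def, h, if_false]
        exact div_nonneg (hγ i) hδpos.le
    · have hmul : δ * ∑ i, γ' i / r i = δ := by
        rw [Finset.mul_sum]
        simp_rw [hterm]
        rw [Finset.sum_sub_distrib, hsum, Finset.sum_ite_eq' Finset.univ istar]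
        simp
      have := mul_left_cancel₀ (ne_of_gt hδpos) (by rw [hmul, mul_one] :
        δ * ∑ i, γ' i / r i = δ * 1)
      exact this
    · simp only [hγ'def, if_true]
      field_simp
      ring
    · intro j hj
      simp only [hγ'def, hj, if_false]
      field_simp
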